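/- Let N be a positive integer, r > 0, and φ_1, …, φ_N ∈ (0, π). Let F : ℕ → ℝ be a function such that lim_{m→∞} F(m)/r^m = 0, and let A_1, …, A_N and B_1, …, B_N be real polynomials. Define x_m = F(m) + Σ_{n=1}^N r^m (A_n(m) cos(mφ_n) + B_n(m) sin(mφ_n)) for all m ∈ ℕ₀. If the sequence (x_m)_{m ≥ 0} is either monotone or anti-monotone, then x_m = F(m) for all m ∈ ℕ₀. -/

import Mathlib

open Filter

open Finset Polynomial Complex

namespace OscAux

lemma cesaroC {f : ℕ → ℂ} {l : ℂ} (hf : Tendsto f atTop (nhds l)) :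
    Tendsto (fun M : ℕ => (∑ m ∈ range M, f m) / (M : ℂ)) atTop (nhds l) := by
  have h := hf.cesaro_smul
  have : (fun M : ℕ => (∑ m ∈ range M, f m) / (M : ℂ)) =
      fun M : ℕ => ((M : ℝ))⁻¹ • ∑ m ∈ range M, f m := by
    funext M
    rw [div_eq_inv_mul, Complex.real_smul]
    push_cast
    ring
  rw [this]
  exact h

lemma cesaroR {f : ℕ → ℝ} {l : ℝ} (hf : Tendsto f atTop (nhds l)) :
    Tendsto (fun M : ℕ => (∑ m ∈ range M, f m) / (M : ℝ)) atTop (nhds l) := by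
  have h := hf.cesaro
  apply h.congr
  intro M
  rw [div_eq_inv_mul]

lemma cesaro_unit {z : ℂ} (h1 : ‖z‖ = 1) (h2 : z ≠ 1) :
    Tendsto (fun M : ℕ => (∑ m ∈ range M, z ^ m) / (M : ℂ)) atTop (nhds 0) := by
  have hz1 : z - 1 ≠ 0 := sub_ne_zero.mpr h2
  apply squeeze_zero_norm (a := fun M : ℕ => (2 / ‖z - 1‖) * (1 / (M : ℝ)))
  · intro M
    rw [norm_div, geom_sum_eq h2, norm_div]
    rw [Complex.norm_natCast]
    rw [div_div, div_mul_div_comm, mul_one]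
    gcongr
    calc ‖z ^ M - 1‖ ≤ ‖z ^ M‖ + ‖(1 : ℂ)‖ := norm_sub_le _ _
      _ ≤ 2 := by rw [norm_pow, h1, one_pow, norm_one]; norm_num
  · have := (tendsto_one_div_atTop_nhds_zero_nat : Tendsto (fun n : ℕ => 1 / (n : ℝ)) atTop (nhds 0))
    have h := this.const_mul (2 / ‖z - 1‖)
    simpa using h

lemma cesaro_one :
    Tendsto (fun M : ℕ => (∑ m ∈ range M, (1:ℂ) ^ m) / (M : ℂ)) atTop (nhds 1) := by
  apply cesaroC
  have h : Tendsto (fun _ : ℕ => (1:ℂ)) atTop (nhds 1) := tendsto_const_nhds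
  apply h.congr
  intro m
  simp

lemma key_trig {ι : Type*} [Fintype ι] (z : ι → ℂ)
    (hz1 : ∀ j, ‖z j‖ = 1) (hz2 : ∀ j, z j ≠ 1)
    (c : ι → ℂ) (t : ℕ → ℂ) (ht : ∀ m, t m = ∑ j, c j * z j ^ m)
    (h1 : ∀ δ : ℝ, 0 < δ → ∀ᶠ m in atTop, -δ ≤ (t m).re)
    (h2 : Tendsto (fun m => (t m).im) atTop (nhds 0)) :
    ∀ m, t m = 0 := by
  classical
  set V : Finset ℂ := Finset.univ.image z with hV
  set d : ℂ → ℂ := fun v => ∑ j ∈ Finset.univ.filter (fun j => z j = v), c j with hd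
  have ht' : ∀ m, t m = ∑ v ∈ V, d v * v ^ m := by
    intro m
    rw [ht]
    rw [← Finset.sum_fiberwise_of_maps_to
      (fun j _ => Finset.mem_image_of_mem z (mem_univ j)) (fun j => c j * z j ^ m)]
    apply Finset.sum_congr rfl
    intro v hv
    rw [hd, Finset.sum_mul]
    apply Finset.sum_congr rfl
    intro j hj
    rw [Finset.mem_filter] at hj
    rw [hj.2]
  have hVunit : ∀ v ∈ V, ‖v‖ = 1 := by
    intro v hv; obtain ⟨j, -, rfl⟩ := Finset.mem_image.mp hv; exact hz1 j
  have hVne : ∀ v ∈ V, v ≠ 1 := by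
    intro v hv; obtain ⟨j, -, rfl⟩ := Finset.mem_image.mp hv; exact hz2 j
  -- mean of t tends to 0
  have mean1 : Tendsto (fun M : ℕ => (∑ m ∈ range M, t m) / (M:ℂ)) atTop (nhds 0) := by
    have heq : ∀ M : ℕ, (∑ m ∈ range M, t m) / (M:ℂ)
        = ∑ v ∈ V, d v * ((∑ m ∈ range M, v ^ m)/(M:ℂ)) := by
      intro M
      rw [Finset.sum_congr rfl (fun m _ => ht' m), Finset.sum_comm, Finset.sum_div]
      apply sum_congr rfl
      intro v hv
      rw [← Finset.mul_sum, mul_div_assoc]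
    simp only [heq]
    have h := tendsto_finset_sum V (fun v hv =>
      ((cesaro_unit (hVunit v hv) (hVne v hv)).const_mul (d v)))
    simpa using h
  -- mean of |t|^2 tends to E'
  set E' : ℝ := ∑ v ∈ V, normSq (d v) with hE'
  have mean2 : Tendsto (fun M : ℕ => (∑ m ∈ range M, (t m * (starRingEnd ℂ) (t m))) / (M:ℂ))
      atTop (nhds (∑ v ∈ V, d v * (starRingEnd ℂ) (d v))) := by
    have hexp : ∀ m : ℕ, t m * (starRingEnd ℂ) (t m)
        = ∑ v ∈ V, ∑ w ∈ V, (d v * (starRingEnd ℂ) (d w)) * (v * (starRingEnd ℂ) w) ^ m := by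
      intro m
      rw [ht' m, map_sum, Finset.sum_mul_sum]
      apply sum_congr rfl; intro v _
      apply sum_congr rfl; intro w _
      rw [map_mul, map_pow, mul_pow]
      ring
    have hswap : ∀ M : ℕ, (∑ m ∈ range M, (t m * (starRingEnd ℂ) (t m))) / (M:ℂ)
        = ∑ v ∈ V, ∑ w ∈ V, (d v * (starRingEnd ℂ) (d w))
            * ((∑ m ∈ range M, (v * (starRingEnd ℂ) w) ^ m) / (M:ℂ)) := by
      intro M
      rw [Finset.sum_congr rfl (fun m _ => hexp m), Finset.sum_comm, Finset.sum_div]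
      apply sum_congr rfl; intro v hv
      rw [Finset.sum_comm, Finset.sum_div]
      apply sum_congr rfl; intro w hw
      rw [← Finset.mul_sum, mul_div_assoc]
    simp only [hswap]
    have hlim : Tendsto (fun M : ℕ => ∑ v ∈ V, ∑ w ∈ V, (d v * (starRingEnd ℂ) (d w))
            * ((∑ m ∈ range M, (v * (starRingEnd ℂ) w) ^ m) / (M:ℂ))) atTop
        (nhds (∑ v ∈ V, ∑ w ∈ V, (d v * (starRingEnd ℂ) (d w)) * (if w = v then 1 else 0))) := by
      apply tendsto_finset_sum; intro v hv
      apply tendsto_finset_sum; intro w hw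
      by_cases hvw : w = v
      · subst hvw
        simp only [if_pos rfl]
        have hww : w * (starRingEnd ℂ) w = 1 := by
          rw [Complex.mul_conj]
          rw [Complex.normSq_eq_norm_sq, hVunit w hw]
          norm_num
        rw [hww]
        exact cesaro_one.const_mul _
      · simp only [if_neg hvw]
        have hwne : (starRingEnd ℂ) w ≠ 0 := by
          intro h
          have : w = 0 := by simpa using congrArg (starRingEnd ℂ) h
          rw [this] at hw
          have := hVunit 0 hw
          simp at this
        have hu : ‖v * (starRingEnd ℂ) w‖ = 1 := by
          rw [norm_mul, RCLike.norm_conj, hVunit v hv, hVunit w hw]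
          norm_num
        have hne : v * (starRingEnd ℂ) w ≠ 1 := by
          intro h
          apply hvw
          have hww : w * (starRingEnd ℂ) w = 1 := by
            rw [Complex.mul_conj]
            rw [Complex.normSq_eq_norm_sq, hVunit w hw]
            norm_num
          have : v * (starRingEnd ℂ) w = w * (starRingEnd ℂ) w := by rw [h, hww]
          exact (mul_right_cancel₀ hwne this).symm
        exact (cesaro_unit hu hne).const_mul _
    have hval : (∑ v ∈ V, ∑ w ∈ V, (d v * (starRingEnd ℂ) (d w)) * (if w = v then 1 else 0))
        = ∑ v ∈ V, d v * (starRingEnd ℂ) (d v) := by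
      apply sum_congr rfl
      intro v hv
      simp only [mul_ite, mul_one, mul_zero]
      rw [Finset.sum_ite_eq' V v (fun w => d v * (starRingEnd ℂ) (d w)), if_pos hv]
    rwa [hval] at hlim
  -- bound on t
  set a : ℕ → ℝ := fun m => (t m).re with ha
  set Cb : ℝ := ∑ v ∈ V, ‖d v‖ with hCbdef
  have hCb0 : 0 ≤ Cb := Finset.sum_nonneg fun v _ => norm_nonneg _
  have htb : ∀ m, ‖t m‖ ≤ Cb := by
    intro m
    rw [ht' m]
    calc ‖∑ v ∈ V, d v * v ^ m‖ ≤ ∑ v ∈ V, ‖d v * v ^ m‖ := norm_sum_le _ _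
      _ = ∑ v ∈ V, ‖d v‖ := by
          apply sum_congr rfl; intro v hv
          rw [norm_mul, norm_pow, hVunit v hv, one_pow, mul_one]
  -- mean of a tends to 0
  have meanRe : Tendsto (fun M : ℕ => (∑ m ∈ range M, a m) / (M:ℝ)) atTop (nhds 0) := by
    have h := (Complex.continuous_re.tendsto 0).comp mean1
    simp only [Complex.zero_re] at h
    apply h.congr
    intro M
    show ((∑ m ∈ range M, t m) / (M:ℂ)).re = _
    rw [show ((M:ℂ)) = ((M:ℝ):ℂ) by push_cast; rfl, Complex.div_ofReal_re]
    congr 1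
    rw [Complex.re_sum]
  -- mean of |t|^2 tends to E'
  have meanSq : Tendsto (fun M : ℕ => (∑ m ∈ range M, normSq (t m)) / (M:ℝ)) atTop (nhds E') := by
    have h := (Complex.continuous_re.tendsto _).comp mean2
    have hre : (∑ v ∈ V, d v * (starRingEnd ℂ) (d v)).re = E' := by
      rw [Complex.re_sum, hE']
      apply sum_congr rfl; intro v hv
      rw [Complex.mul_conj, Complex.ofReal_re]
    rw [hre] at h
    apply h.congr
    intro M
    show ((∑ m ∈ range M, (t m * (starRingEnd ℂ) (t m))) / (M:ℂ)).re = _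
    rw [show ((M:ℂ)) = ((M:ℝ):ℂ) by push_cast; rfl, Complex.div_ofReal_re]
    congr 1
    rw [Complex.re_sum]
    apply sum_congr rfl; intro m _
    rw [Complex.mul_conj, Complex.ofReal_re]
  -- mean of im^2 tends to 0
  have him2 : Tendsto (fun m : ℕ => (t m).im ^ 2) atTop (nhds 0) := by
    have := h2.mul h2
    simpa [pow_two] using this
  have meanIm2 := cesaroR him2
  -- mean of a^2 tends to E'
  have meanASq : Tendsto (fun M : ℕ => (∑ m ∈ range M, a m ^ 2) / (M:ℝ)) atTop (nhds E') := by
    have heq : ∀ M : ℕ, (∑ m ∈ range M, a m ^ 2)/(M:ℝ)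
        = (∑ m ∈ range M, normSq (t m))/(M:ℝ) - (∑ m ∈ range M, (t m).im ^ 2)/(M:ℝ) := by
      intro M
      rw [div_sub_div_same, ← Finset.sum_sub_distrib]
      congr 1
      apply sum_congr rfl; intro m _
      rw [Complex.normSq_apply]
      ring
    have h := meanSq.sub meanIm2
    rw [sub_zero] at h
    exact h.congr fun M => (heq M).symm
  -- neg part tends to 0
  set neg : ℕ → ℝ := fun m => max (-(a m)) 0 with hnegdef
  have hneg0 : Tendsto neg atTop (nhds 0) := by
    rw [Metric.tendsto_atTop]
    intro ε hε
    obtain ⟨Nn, hNn⟩ := eventually_atTop.mp (h1 (ε/2) (by positivity))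
    refine ⟨Nn, fun n hn => ?_⟩
    have h := hNn n hn
    rw [Real.dist_eq, sub_zero, _root_.abs_of_nonneg (le_max_right _ _)]
    have : neg n ≤ ε/2 := max_le (by simp only [ha] at h ⊢; linarith) (by positivity)
    linarith
  have meanNeg := cesaroR hneg0
  -- pointwise bound
  have hpt : ∀ m, a m ^ 2 ≤ Cb * a m + (2*Cb) * neg m := by
    intro m
    have hab : |a m| ≤ Cb := le_trans (Complex.abs_re_le_norm (t m))
      (le_trans (le_of_eq rfl) (htb m))
    have habs : |a m| = a m + 2 * neg m := by
      rcases le_total 0 (a m) with h|h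
      · rw [_root_.abs_of_nonneg h]
        have hh : neg m = 0 := max_eq_right (by linarith)
        rw [hh]; ring
      · rw [_root_.abs_of_nonpos h]
        have hh : neg m = -(a m) := max_eq_left (by linarith)
        rw [hh]; ring
    calc a m ^ 2 = |a m| * |a m| := by rw [← _root_.sq_abs (a m), pow_two]
      _ ≤ Cb * |a m| := by
          apply mul_le_mul_of_nonneg_right hab (abs_nonneg _)
      _ = Cb * a m + (2*Cb) * neg m := by rw [habs]; ring
  -- mean inequality
  have hmean_le : ∀ M : ℕ, (∑ m ∈ range M, a m ^ 2)/(M:ℝ)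
      ≤ Cb * ((∑ m ∈ range M, a m)/(M:ℝ)) + (2*Cb) * ((∑ m ∈ range M, neg m)/(M:ℝ)) := by
    intro M
    rcases Nat.eq_zero_or_pos M with hM | hM
    · subst hM; simp
    have hMpos : (0:ℝ) < (M:ℝ) := by exact_mod_cast hM
    have h1' : (∑ m ∈ range M, a m ^ 2) ≤ ∑ m ∈ range M, (Cb * a m + (2*Cb) * neg m) :=
      Finset.sum_le_sum fun m _ => hpt m
    calc (∑ m ∈ range M, a m ^ 2)/(M:ℝ)
        ≤ (∑ m ∈ range M, (Cb * a m + (2*Cb) * neg m))/(M:ℝ) := by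
          exact div_le_div_of_nonneg_right h1' hMpos.le
      _ = Cb * ((∑ m ∈ range M, a m)/(M:ℝ)) + (2*Cb) * ((∑ m ∈ range M, neg m)/(M:ℝ)) := by
          rw [Finset.sum_add_distrib, ← Finset.mul_sum, ← Finset.mul_sum, add_div,
            mul_div_assoc, mul_div_assoc]
  -- conclude E' = 0
  have hE'le : E' ≤ 0 := by
    have hrhs := (meanRe.const_mul Cb).add (meanNeg.const_mul (2*Cb))
    have h := le_of_tendsto_of_tendsto' meanASq hrhs hmean_le
    simpa using h
  have hE'eq : E' = 0 := le_antisymm hE'le (Finset.sum_nonneg fun v _ => normSq_nonneg _)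
  have hd0 : ∀ v ∈ V, d v = 0 := by
    intro v hv
    have h := (Finset.sum_eq_zero_iff_of_nonneg (fun v _ => normSq_nonneg (d v))).mp hE'eq v hv
    exact Complex.normSq_eq_zero.mp h
  intro m
  rw [ht' m]
  exact Finset.sum_eq_zero fun v hv => by rw [hd0 v hv, zero_mul]

lemma poly_decay (q : Polynomial ℂ) (D : ℕ) (hq : ∀ k, D ≤ k → q.coeff k = 0) :
    Tendsto (fun m : ℕ => q.eval (m:ℂ) / (m:ℂ)^D) atTop (nhds 0) := by
  by_cases hq0 : q = 0
  · subst hq0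
    have h : Tendsto (fun _ : ℕ => (0:ℂ)) atTop (nhds 0) := tendsto_const_nhds
    apply h.congr
    intro m
    simp
  have hdeg : q.natDegree < D := by
    by_contra h
    push_neg at h
    exact hq0 (Polynomial.leadingCoeff_eq_zero.mp (hq _ h))
  have heq : ∀ m : ℕ, q.eval (m:ℂ)/(m:ℂ)^D = ∑ k ∈ range D, q.coeff k * ((m:ℂ)^k/(m:ℂ)^D) := by
    intro m
    rw [Polynomial.eval_eq_sum_range' hdeg, Finset.sum_div]
    exact sum_congr rfl fun k _ => mul_div_assoc _ _ _
  simp only [heq]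
  have h : Tendsto (fun m : ℕ => ∑ k ∈ range D, q.coeff k * ((m:ℂ)^k/(m:ℂ)^D)) atTop
      (nhds (∑ _k ∈ range D, (0:ℂ))) := by
    apply tendsto_finset_sum
    intro k hk
    apply squeeze_zero_norm' (a := fun m : ℕ => ‖q.coeff k‖ * (1/(m:ℝ)))
    · filter_upwards [eventually_ge_atTop 1] with m hm
      have hm' : (1:ℝ) ≤ (m:ℝ) := by exact_mod_cast hm
      have hm0 : (0:ℝ) < (m:ℝ) := by linarith
      rw [norm_mul, norm_div, norm_pow, norm_pow, Complex.norm_natCast]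
      apply mul_le_mul_of_nonneg_left _ (norm_nonneg _)
      rw [div_le_div_iff₀ (by positivity) hm0, one_mul]
      calc (m:ℝ)^k * m = (m:ℝ)^(k+1) := by ring
        _ ≤ (m:ℝ)^D := pow_le_pow_right₀ hm' (Finset.mem_range.mp hk)
    · have := (tendsto_one_div_atTop_nhds_zero_nat : Tendsto (fun n : ℕ => 1 / (n : ℝ)) atTop (nhds 0)).const_mul ‖q.coeff k‖
      simpa using this
  simpa using h

lemma key_poly {ι : Type*} [Fintype ι] (z : ι → ℂ)
    (hz1 : ∀ j, ‖z j‖ = 1) (hz2 : ∀ j, z j ≠ 1) :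
    ∀ D : ℕ, ∀ p : ι → Polynomial ℂ, (∀ j k, D ≤ k → (p j).coeff k = 0) →
    ∀ u : ℕ → ℝ, (∀ m : ℕ, (u m : ℂ) = ∑ j, (p j).eval (m:ℂ) * z j ^ m) →
    (∀ ε : ℝ, 0 < ε → ∀ᶠ m in atTop, -ε ≤ u m) → ∀ m, u m = 0 := by
  intro D
  induction D with
  | zero =>
    intro p hp u hu hsign m
    have hp0 : ∀ j, p j = 0 := fun j => Polynomial.ext fun k => by
      simpa using hp j k (Nat.zero_le k)
    have h : (u m : ℂ) = 0 := by
      rw [hu m]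
      apply Finset.sum_eq_zero
      intro j _
      rw [hp0 j]
      simp
    exact_mod_cast h
  | succ D ih =>
    intro p hp u hu hsign
    set c : ι → ℂ := fun j => (p j).coeff D with hc
    set q : ι → Polynomial ℂ := fun j => p j - Polynomial.C (c j) * Polynomial.X ^ D with hqdef
    have hqcoeff : ∀ j k, D ≤ k → (q j).coeff k = 0 := by
      intro j k hk
      rw [hqdef]
      simp only [Polynomial.coeff_sub, Polynomial.coeff_C_mul, Polynomial.coeff_X_pow]
      rcases eq_or_lt_of_le hk with h | h
      · rw [← h, if_pos rfl, mul_one, hc, sub_self]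
      · rw [hp j k h, if_neg (by omega), mul_zero, sub_zero]
    set t : ℕ → ℂ := fun m => ∑ j, c j * z j ^ m with htdef
    set w : ℕ → ℂ := fun m => ∑ j, (q j).eval (m:ℂ) * z j ^ m with hwdef
    have hqeval : ∀ j, ∀ m : ℕ, (q j).eval (m:ℂ) = (p j).eval (m:ℂ) - c j * (m:ℂ)^D := by
      intro j m
      rw [hqdef]
      simp
    have hw : ∀ m : ℕ, (u m : ℂ) = w m + (m:ℂ)^D * t m := by
      intro m
      rw [hu m, hwdef, htdef]
      simp only [Finset.mul_sum, ← Finset.sum_add_distrib]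
      apply sum_congr rfl
      intro j _
      rw [hqeval j m]
      ring
    have hw0 : Tendsto (fun m : ℕ => w m / (m:ℂ)^D) atTop (nhds 0) := by
      have heq : ∀ m : ℕ, w m / (m:ℂ)^D = ∑ j, ((q j).eval (m:ℂ) / (m:ℂ)^D) * z j ^ m := by
        intro m
        rw [hwdef, Finset.sum_div]
        apply sum_congr rfl
        intro j _
        ring
      simp only [heq]
      have h : Tendsto (fun m : ℕ => ∑ j, ((q j).eval (m:ℂ) / (m:ℂ)^D) * z j ^ m) atTop
          (nhds (∑ _j : ι, (0:ℂ))) := by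
        apply tendsto_finset_sum
        intro j _
        apply squeeze_zero_norm (a := fun m : ℕ => ‖(q j).eval (m:ℂ) / (m:ℂ)^D‖)
        · intro m
          rw [norm_mul, norm_pow, hz1 j, one_pow, mul_one]
        · have h2 := (poly_decay (q j) D (hqcoeff j)).norm
          simpa using h2
      simpa using h
    have hmDne : ∀ m : ℕ, 1 ≤ m → ((m:ℂ))^D ≠ 0 := by
      intro m hm
      exact pow_ne_zero _ (Nat.cast_ne_zero.mpr (by omega))
    have htformula : ∀ m : ℕ, 1 ≤ m → t m = ((u m : ℂ) - w m) / (m:ℂ)^D := by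
      intro m hm
      rw [eq_div_iff (hmDne m hm), hw m]
      ring
    have ht1 : ∀ δ : ℝ, 0 < δ → ∀ᶠ m in atTop, -δ ≤ (t m).re := by
      intro δ hδ
      have hs := hsign (δ/2) (by positivity)
      have hwsmall : ∀ᶠ m : ℕ in atTop, ‖w m / (m:ℂ)^D‖ < δ/2 := by
        have h := hw0.norm
        rw [norm_zero] at h
        exact h.eventually_lt_const (by positivity)
      filter_upwards [hs, hwsmall, eventually_ge_atTop 1] with m hm1 hm2 hm3
      have hmR : (1:ℝ) ≤ (m:ℝ) := by exact_mod_cast hm3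
      have hmDR : (0:ℝ) < (m:ℝ)^D := by positivity
      have hmDR1 : (1:ℝ) ≤ (m:ℝ)^D := one_le_pow₀ hmR
      have hre : (t m).re = (u m - (w m).re)/((m:ℝ)^D) := by
        rw [htformula m hm3, show ((m:ℂ))^D = (((m:ℝ)^D : ℝ) : ℂ) by push_cast; ring,
          Complex.div_ofReal_re]
        simp
      rw [hre, le_div_iff₀ hmDR]
      have hnorm : ‖w m / (m:ℂ)^D‖ = ‖w m‖/(m:ℝ)^D := by
        rw [norm_div, norm_pow, Complex.norm_natCast]
      rw [hnorm, div_lt_iff₀ hmDR] at hm2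
      have hwre : |(w m).re| ≤ ‖w m‖ := by
        exact Complex.abs_re_le_norm (w m)
      have habs := abs_le.mp (le_trans hwre hm2.le)
      nlinarith
    have ht2 : Tendsto (fun m => (t m).im) atTop (nhds 0) := by
      apply squeeze_zero_norm' (a := fun m : ℕ => ‖w m/(m:ℂ)^D‖)
      · filter_upwards [eventually_ge_atTop 1] with m hm
        have hmR : (1:ℝ) ≤ (m:ℝ) := by exact_mod_cast hm
        have hmDR : (0:ℝ) < (m:ℝ)^D := by positivity
        have him : (t m).im = (-(w m).im)/((m:ℝ)^D) := by
          rw [htformula m hm, show ((m:ℂ))^D = (((m:ℝ)^D : ℝ) : ℂ) by push_cast; ring,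
            Complex.div_ofReal_im]
          simp
        rw [Real.norm_eq_abs, him, norm_div, norm_pow, Complex.norm_natCast,
          abs_div, abs_neg, _root_.abs_of_pos hmDR]
        apply div_le_div_of_nonneg_right _ hmDR.le
        exact Complex.abs_im_le_norm (w m)
      · have h := hw0.norm
        rw [norm_zero] at h
        exact h
    have htzero : ∀ m, t m = 0 := key_trig z hz1 hz2 c t (fun m => by rw [htdef]) ht1 ht2
    have hw' : ∀ m : ℕ, (u m : ℂ) = w m := fun m => by
      rw [hw m, htzero m, mul_zero, add_zero]
    exact ih q hqcoeff u hw' hsign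

lemma vanish {ι : Type*} [Fintype ι] (z : ι → ℂ)
    (h1 : ∀ j, ‖z j‖ = 1) (h2 : ∀ j, z j ≠ 1) (p : ι → Polynomial ℂ) (v : ℕ → ℝ)
    (hv : ∀ m : ℕ, ((v m : ℝ) : ℂ) = ∑ j, (p j).eval (m:ℂ) * z j ^ m)
    (hs : ∀ ε : ℝ, 0 < ε → ∀ᶠ m in atTop, -ε ≤ v m) : ∀ m, v m = 0 := by
  apply key_poly z h1 h2 ((Finset.univ.sup fun j => (p j).natDegree) + 1) p ?_ v hv hs
  intro j k hk
  apply Polynomial.coeff_eq_zero_of_natDegree_lt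
  have h3 : (p j).natDegree ≤ Finset.univ.sup fun i => (p i).natDegree := by
    exact Finset.le_sup (f := fun i => (p i).natDegree) (Finset.mem_univ j)
  omega

end OscAux

open OscAux

/-- Lemma on eliminating oscillating terms: if
`x_m = F(m) + Σ_{n=1}^N r^m (A_n(m) cos(mφ_n) + B_n(m) sin(mφ_n))` with `r > 0`,
`φ_n ∈ (0, π)` and `F(m)/r^m → 0`, and the sequence `(x_m)` is monotone or
anti-monotone, then `x_m = F(m)` for all `m`. -/
theorem eq_of_monotone_or_antimonotone_oscillation
    (N : ℕ) (hN : 0 < N) (r : ℝ) (hr : 0 < r)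
    (φ : Fin N → ℝ) (hφ : ∀ n, φ n ∈ Set.Ioo (0 : ℝ) Real.pi)
    (F : ℕ → ℝ) (hF : Tendsto (fun m : ℕ => F m / r ^ m) atTop (nhds 0))
    (A B : Fin N → Polynomial ℝ) (x : ℕ → ℝ)
    (hx : ∀ m : ℕ, x m = F m + ∑ n : Fin N,
      r ^ m * ((A n).eval (m : ℝ) * Real.cos (m * φ n) +
               (B n).eval (m : ℝ) * Real.sin (m * φ n)))
    (hmono : Monotone x ∨ Antitone x ∨
      (∀ m : ℕ, 0 ≤ (-1 : ℝ) ^ m * (x (m + 1) - x m)) ∨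
      (∀ m : ℕ, (-1 : ℝ) ^ m * (x (m + 1) - x m) ≤ 0)) :
    ∀ m : ℕ, x m = F m := by
  have hrne : r ≠ 0 := ne_of_gt hr
  set G : ℕ → ℝ := fun m => ∑ n : Fin N,
      ((A n).eval (m : ℝ) * Real.cos (m * φ n) + (B n).eval (m : ℝ) * Real.sin (m * φ n))
    with hGdef
  have hxG : ∀ m : ℕ, x m = F m + r ^ m * G m := by
    intro m
    rw [hx m, hGdef, Finset.mul_sum]
  -- complex exponential setup
  set ζ : Fin N × Bool → ℂ :=
      fun j => Complex.exp ((↑(if j.2 then φ j.1 else -φ j.1) : ℂ) * Complex.I) with hζdef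
  have hζunit : ∀ j, ‖ζ j‖ = 1 := by
    intro j
    rw [hζdef, Complex.norm_exp_ofReal_mul_I]
  have hζim : ∀ j, (ζ j).im ≠ 0 := by
    rintro ⟨n, b⟩
    rw [hζdef]
    simp only [Complex.exp_ofReal_mul_I_im]
    have hs := Real.sin_pos_of_pos_of_lt_pi (hφ n).1 (hφ n).2
    cases b <;> simp [Real.sin_neg] <;> linarith
  have hζne1 : ∀ j, ζ j ≠ 1 := by
    intro j h
    apply hζim j
    rw [h]
    simp
  have hζneg_unit : ∀ j, ‖-ζ j‖ = 1 := by
    intro j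
    rw [norm_neg]
    exact hζunit j
  have hζneg_ne1 : ∀ j, -ζ j ≠ 1 := by
    intro j h
    apply hζim j
    have : ζ j = -1 := by linear_combination -h
    rw [this]
    simp
  -- the polynomials
  set P : Fin N × Bool → Polynomial ℂ := fun j =>
      Polynomial.C (1/2 : ℂ) * ((A j.1).map Complex.ofRealHom +
        Polynomial.C (if j.2 then -Complex.I else Complex.I) * (B j.1).map Complex.ofRealHom)
    with hPdef
  have hmapeval : ∀ (p : Polynomial ℝ) (m : ℕ),
      (p.map Complex.ofRealHom).eval ((m : ℕ) : ℂ) = ((p.eval ((m : ℕ) : ℝ) : ℝ) : ℂ) := by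
    intro p m
    rw [show ((m : ℕ) : ℂ) = Complex.ofRealHom ((m : ℕ) : ℝ) by simp,
      Polynomial.eval_map, Polynomial.eval₂_at_apply]
    rfl
  have hζpow : ∀ (j : Fin N × Bool) (m : ℕ),
      (ζ j) ^ m = Complex.exp ((↑((if j.2 then φ j.1 else -φ j.1) * m) : ℂ) * Complex.I) := by
    intro j m
    rw [hζdef, ← Complex.exp_nat_mul]
    congr 1
    push_cast
    ring
  have hrepG : ∀ m : ℕ, ((G m : ℝ) : ℂ) = ∑ j, (P j).eval (m:ℂ) * (ζ j) ^ m := by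
    intro m
    simp only [hGdef]
    push_cast
    rw [Fintype.sum_prod_type]
    apply Finset.sum_congr rfl
    intro n _
    rw [Fintype.sum_bool]
    have hz1 : ζ (n, true) ^ m = Complex.exp ((↑(φ n * m) : ℂ) * Complex.I) := by
      rw [hζpow]
      norm_num
    have hz2 : ζ (n, false) ^ m = Complex.exp ((↑(-(φ n * m)) : ℂ) * Complex.I) := by
      rw [hζpow]
      congr 2
      push_cast
      ring
    have hp1 : (P (n, true)).eval ((m:ℕ):ℂ) =
        (1/2 : ℂ) * ((((A n).eval ((m:ℕ):ℝ) : ℝ) : ℂ) + (-Complex.I) * (((B n).eval ((m:ℕ):ℝ) : ℝ) : ℂ)) := by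
      rw [hPdef]
      simp only [Polynomial.eval_mul, Polynomial.eval_add, Polynomial.eval_C]
      simp [hmapeval (A n) m, hmapeval (B n) m]
    have hp0 : (P (n, false)).eval ((m:ℕ):ℂ) =
        (1/2 : ℂ) * ((((A n).eval ((m:ℕ):ℝ) : ℝ) : ℂ) + Complex.I * (((B n).eval ((m:ℕ):ℝ) : ℝ) : ℂ)) := by
      rw [hPdef]
      simp only [Polynomial.eval_mul, Polynomial.eval_add, Polynomial.eval_C]
      simp [hmapeval (A n) m, hmapeval (B n) m]
    have e1 : Complex.exp ((↑(φ n * m) : ℂ) * Complex.I)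
        = (Real.cos ((m : ℝ) * φ n) : ℂ) + (Real.sin ((m : ℝ) * φ n) : ℂ) * Complex.I := by
      rw [Complex.exp_mul_I, mul_comm (φ n) ((m:ℕ):ℝ), Complex.ofReal_cos, Complex.ofReal_sin]
    have e2 : Complex.exp ((↑(-(φ n * m)) : ℂ) * Complex.I)
        = (Real.cos ((m : ℝ) * φ n) : ℂ) - (Real.sin ((m : ℝ) * φ n) : ℂ) * Complex.I := by
      rw [Complex.exp_mul_I, mul_comm (φ n) ((m:ℕ):ℝ), Complex.ofReal_cos, Complex.ofReal_sin]
      push_cast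
      rw [Complex.cos_neg, Complex.sin_neg]
      ring
    rw [hz1, hz2, hp1, hp0, e1, e2]
    rw [show ((m:ℂ) * ((φ n : ℝ):ℂ)) = ((((m:ℕ):ℝ) * φ n : ℝ) : ℂ) by push_cast; ring]
    rw [← Complex.ofReal_cos, ← Complex.ofReal_sin]
    set a : ℂ := (((A n).eval ((m:ℕ) : ℝ) : ℝ) : ℂ)
    set b : ℂ := (((B n).eval ((m:ℕ) : ℝ) : ℝ) : ℂ)
    set cc : ℂ := (Real.cos (((m:ℕ) : ℝ) * φ n) : ℂ)
    set ss : ℂ := (Real.sin (((m:ℕ) : ℝ) * φ n) : ℂ)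
    linear_combination (b * ss) * Complex.I_sq
  -- difference sequence and its polynomials
  set u : ℕ → ℝ := fun m => r * G (m+1) - G m with hudef
  set Q : Fin N × Bool → Polynomial ℂ := fun j =>
      Polynomial.C ((r:ℂ) * ζ j) * ((P j).comp (Polynomial.X + Polynomial.C 1)) - P j with hQdef
  have hQeval : ∀ (j : Fin N × Bool) (m : ℕ),
      (Q j).eval (m:ℂ) = (r:ℂ) * ζ j * (P j).eval ((m:ℂ)+1) - (P j).eval (m:ℂ) := by
    intro j m
    rw [hQdef]
    simp [Polynomial.eval_comp, mul_assoc]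
  have hrepu : ∀ m : ℕ, ((u m : ℝ) : ℂ) = ∑ j, (Q j).eval (m:ℂ) * (ζ j) ^ m := by
    intro m
    have h1 := hrepG (m+1)
    have h0 := hrepG m
    have hcast : ((u m : ℝ) : ℂ) = (r:ℂ) * ((G (m+1) : ℝ):ℂ) - ((G m : ℝ):ℂ) := by
      rw [hudef]; push_cast; ring
    rw [hcast, h1, h0, Finset.mul_sum, ← Finset.sum_sub_distrib]
    apply Finset.sum_congr rfl
    intro j _
    rw [hQeval j m, show (((m+1 : ℕ)) : ℂ) = (m:ℂ) + 1 by push_cast; ring, pow_succ]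
    ring
  have hrepv : ∀ m : ℕ, ((((-1:ℝ))^m * u m : ℝ) : ℂ) = ∑ j, (Q j).eval (m:ℂ) * (-ζ j) ^ m := by
    intro m
    have hcast : ((((-1:ℝ))^m * u m : ℝ) : ℂ) = ((-1:ℂ))^m * ((u m :ℝ):ℂ) := by push_cast; ring
    rw [hcast, hrepu m, Finset.mul_sum]
    apply Finset.sum_congr rfl
    intro j _
    rw [neg_pow]
    ring
  -- F-difference tends to 0
  have hFd : Tendsto (fun m : ℕ => (F (m+1) - F m)/r^m) atTop (nhds 0) := by
    have h1 : Tendsto (fun m : ℕ => F (m+1) / r^(m+1)) atTop (nhds 0) :=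
      hF.comp (tendsto_add_atTop_nat 1)
    have h2 := (h1.const_mul r).sub hF
    rw [mul_zero, sub_zero] at h2
    apply h2.congr
    intro m
    rw [pow_succ]
    field_simp
  have hu_eq : ∀ m : ℕ, u m = (x (m+1) - x m)/r^m - (F (m+1) - F m)/r^m := by
    intro m
    have hX : x (m+1) - x m = (F (m+1) - F m) + r^m * u m := by
      rw [hxG (m+1), hxG m, hudef, pow_succ]
      ring
    rw [hX]
    field_simp
    ring
  -- wrapper with an error sequence
  have vanish' : ∀ (z : Fin N × Bool → ℂ), (∀ j, ‖z j‖ = 1) → (∀ j, z j ≠ 1) →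
      ∀ (p : Fin N × Bool → Polynomial ℂ) (v e : ℕ → ℝ),
      Tendsto e atTop (nhds 0) → (∀ m, e m ≤ v m) →
      (∀ m : ℕ, ((v m : ℝ):ℂ) = ∑ j, (p j).eval (m:ℂ) * z j ^ m) → ∀ m, v m = 0 := by
    intro z h1 h2 p v e he hle hrep
    apply vanish z h1 h2 p v hrep
    intro ε hε
    obtain ⟨M0, hM0⟩ := Metric.tendsto_atTop.mp he ε hε
    rw [eventually_atTop]
    refine ⟨M0, fun m hm => ?_⟩
    have hd := hM0 m hm
    rw [Real.dist_eq, sub_zero] at hd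
    have := abs_lt.mp hd
    linarith [hle m]
  -- u vanishes in all four cases
  have hu0 : ∀ m : ℕ, u m = 0 := by
    have hrpos : ∀ m : ℕ, (0:ℝ) < r^m := fun m => pow_pos hr m
    rcases hmono with hc | hc | hc | hc
    · apply vanish' ζ hζunit hζne1 Q u (fun m => -((F (m+1) - F m)/r^m)) (by simpa using hFd.neg) ?_ hrepu
      · intro m
        have hx0 : 0 ≤ (x (m+1) - x m)/r^m :=
          div_nonneg (sub_nonneg.mpr (hc (Nat.le_succ m))) (hrpos m).le
        have heq := hu_eq m
        show -((F (m + 1) - F m) / r ^ m) ≤ u m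
        linarith
    · have h := vanish' ζ hζunit hζne1 (fun j => -Q j) (fun m => -u m)
        (fun m => (F (m+1) - F m)/r^m) hFd ?_ ?_
      · intro m
        have hz : -u m = 0 := h m
        linarith
      · intro m
        have hx0 : (x (m+1) - x m)/r^m ≤ 0 :=
          div_nonpos_of_nonpos_of_nonneg (sub_nonpos.mpr (hc (Nat.le_succ m))) (hrpos m).le
        have := hu_eq m
        linarith
      · intro m
        have hcast : ((-u m : ℝ) : ℂ) = -((u m : ℝ):ℂ) := by push_cast; ring
        rw [hcast, hrepu m, ← Finset.sum_neg_distrib]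
        apply Finset.sum_congr rfl
        intro j _
        simp only [Polynomial.eval_neg]
        ring
    · have habs : Tendsto (fun m : ℕ => -(((-1:ℝ))^m * ((F (m+1) - F m)/r^m))) atTop (nhds 0) := by
        apply squeeze_zero_norm (a := fun m : ℕ => |(F (m+1) - F m)/r^m|)
        · intro m
          simp [abs_mul, _root_.abs_pow, abs_div]
        · have := hFd.abs
          simpa using this
      have h := vanish' (fun j => -ζ j) hζneg_unit hζneg_ne1 Q
        (fun m => ((-1:ℝ))^m * u m)
        (fun m => -(((-1:ℝ))^m * ((F (m+1) - F m)/r^m))) habs ?_ hrepv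
      · intro m
        have hm : ((-1:ℝ))^m * u m = 0 := h m
        have hne : ((-1:ℝ))^m ≠ 0 := pow_ne_zero _ (by norm_num)
        rcases mul_eq_zero.mp hm with h' | h'
        · exact absurd h' hne
        · exact h'
      · intro m
        have hx0 : 0 ≤ ((-1:ℝ))^m * ((x (m+1) - x m)/r^m) := by
          rw [← mul_div_assoc]
          exact div_nonneg (hc m) (hrpos m).le
        have heq : ((-1:ℝ))^m * u m
            = ((-1:ℝ))^m * ((x (m+1) - x m)/r^m) - ((-1:ℝ))^m * ((F (m+1) - F m)/r^m) := by
          rw [hu_eq m]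
          ring
        show -(((-1:ℝ))^m * ((F (m+1) - F m)/r^m)) ≤ ((-1:ℝ))^m * u m
        rw [heq]
        linarith
    · have habs : Tendsto (fun m : ℕ => (((-1:ℝ))^m * ((F (m+1) - F m)/r^m))) atTop (nhds 0) := by
        apply squeeze_zero_norm (a := fun m : ℕ => |(F (m+1) - F m)/r^m|)
        · intro m
          simp [abs_mul, _root_.abs_pow, abs_div]
        · have := hFd.abs
          simpa using this
      have h := vanish' (fun j => -ζ j) hζneg_unit hζneg_ne1 (fun j => -Q j)
        (fun m => -(((-1:ℝ))^m * u m))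
        (fun m => (((-1:ℝ))^m * ((F (m+1) - F m)/r^m))) habs ?_ ?_
      · intro m
        have hm : -(((-1:ℝ))^m * u m) = 0 := h m
        have hne : ((-1:ℝ))^m ≠ 0 := pow_ne_zero _ (by norm_num)
        have hm' : ((-1:ℝ))^m * u m = 0 := by linarith
        rcases mul_eq_zero.mp hm' with h' | h'
        · exact absurd h' hne
        · exact h'
      · intro m
        have hx0 : ((-1:ℝ))^m * ((x (m+1) - x m)/r^m) ≤ 0 := by
          rw [← mul_div_assoc]
          exact div_nonpos_of_nonpos_of_nonneg (hc m) (hrpos m).le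
        have heq : -(((-1:ℝ))^m * u m)
            = ((-1:ℝ))^m * ((F (m+1) - F m)/r^m) - ((-1:ℝ))^m * ((x (m+1) - x m)/r^m) := by
          rw [hu_eq m]
          ring
        show ((-1:ℝ))^m * ((F (m+1) - F m)/r^m) ≤ -(((-1:ℝ))^m * u m)
        rw [heq]
        linarith
      · intro m
        have hcast : ((-(((-1:ℝ))^m * u m) : ℝ) : ℂ) = -((((-1:ℝ))^m * u m : ℝ):ℂ) := by
          push_cast; ring
        rw [hcast, hrepv m, ← Finset.sum_neg_distrib]
        apply Finset.sum_congr rfl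
        intro j _
        simp only [Polynomial.eval_neg]
        ring
  -- the oscillating part satisfies G m = G 0 / r^m
  have hGm : ∀ m : ℕ, G m = G 0 / r^m := by
    intro m
    induction m with
    | zero => simp
    | succ k ih =>
      have hk : r * G (k+1) - G k = 0 := hu0 k
      have hGk : G (k+1) = G k / r := by
        rw [eq_div_iff hrne]
        linarith
      rw [hGk, ih, div_div, pow_succ]
  -- conclude G ≡ 0
  have hG0 : ∀ m : ℕ, G m = 0 := by
    rcases le_or_gt 0 (G 0) with hs | hs
    · apply vanish' ζ hζunit hζne1 P G (fun _ => 0) tendsto_const_nhds ?_ hrepG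
      intro m
      show (0:ℝ) ≤ G m
      rw [hGm m]
      positivity
    · have h := vanish' ζ hζunit hζne1 (fun j => -P j) (fun m => -G m) (fun _ => 0)
        tendsto_const_nhds ?_ ?_
      · intro m
        have hz : -G m = 0 := h m
        linarith
      · intro m
        show (0:ℝ) ≤ -G m
        rw [hGm m]
        have : 0 < -G 0 := by linarith
        have hd : 0 ≤ (-G 0) / r^m := div_nonneg this.le (pow_pos hr m).le
        rw [neg_div] at hd
        linarith
      · intro m
        have hcast : ((-G m : ℝ) : ℂ) = -((G m : ℝ):ℂ) := by push_cast; ring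
        rw [hcast, hrepG m, ← Finset.sum_neg_distrib]
        apply Finset.sum_congr rfl
        intro j _
        simp only [Polynomial.eval_neg]
        ring
  intro m
  rw [hxG m, hG0 m, mul_zero, add_zero]
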